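/- Let a > 0 and let L : ℕ → ℕ be defined recursively by L_{n+1} = ℓ_n · L_n, where ℓ_n = 5·⌊(L_n)^a / 5⌋, and assume L_0 ≥ 1 and (L_0)^a ≥ 10. Then for every θ > 0 the series ∑_{n=0}^∞ (L_n)^{−θ} converges. -/

import Mathlib

theorem recursive_scale_summable
    (a : ℝ) (ha : 0 < a) (L : ℕ → ℕ)
    (hrec : ∀ n, L (n + 1) = 5 * ⌊((L n : ℝ) ^ a) / 5⌋₊ * L n)
    (hL0 : 1 ≤ L 0) (hL0a : (10 : ℝ) ≤ (L 0 : ℝ) ^ a)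
    (θ : ℝ) (hθ : 0 < θ) :
    Summable (fun n => (L n : ℝ) ^ (-θ)) := by
  -- L is bounded below by L 0
  have hmono : ∀ n, L 0 ≤ L n := by
    intro n
    induction n with
    | zero => exact le_refl _
    | succ n ih =>
      have h10 : (10 : ℝ) ≤ (L n : ℝ) ^ a := by
        refine hL0a.trans (Real.rpow_le_rpow (by positivity) ?_ ha.le)
        exact_mod_cast ih
      have hfloor : 2 ≤ ⌊((L n : ℝ) ^ a) / 5⌋₊ := by
        refine Nat.le_floor ?_
        push_cast
        linarith
      calc L 0 ≤ L n := ih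
        _ = 1 * L n := (one_mul _).symm
        _ ≤ 5 * ⌊((L n : ℝ) ^ a) / 5⌋₊ * L n := by
            apply Nat.mul_le_mul_right
            omega
        _ = L (n + 1) := (hrec n).symm
  have hgrow : ∀ n, 2 ^ n ≤ L n := by
    intro n
    induction n with
    | zero => simpa using hL0
    | succ n ih =>
      have h10 : (10 : ℝ) ≤ (L n : ℝ) ^ a := by
        refine hL0a.trans (Real.rpow_le_rpow (by positivity) ?_ ha.le)
        exact_mod_cast hmono n
      have hfloor : 2 ≤ ⌊((L n : ℝ) ^ a) / 5⌋₊ := by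
        refine Nat.le_floor ?_
        push_cast
        linarith
      calc 2 ^ (n + 1) = 2 * 2 ^ n := by ring
        _ ≤ 5 * ⌊((L n : ℝ) ^ a) / 5⌋₊ * L n := by
            apply Nat.mul_le_mul
            · omega
            · exact ih
        _ = L (n + 1) := (hrec n).symm
  have hLpos : ∀ n, 0 < (L n : ℝ) := fun n => by
    have := hgrow n
    have : (0:ℕ) < L n := lt_of_lt_of_le (Nat.pow_pos (by norm_num : (0:ℕ) < 2)) this
    exact_mod_cast this
  have hbase : (0:ℝ) ≤ (2:ℝ) ^ (-θ) := Real.rpow_nonneg (by norm_num) _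
  have hbase1 : (2:ℝ) ^ (-θ) < 1 := by
    apply Real.rpow_lt_one_of_one_lt_of_neg (by norm_num) (by linarith)
  refine Summable.of_nonneg_of_le (fun n => Real.rpow_nonneg (hLpos n).le _)
    (fun n => ?_) ((summable_geometric_of_lt_one hbase hbase1))
  have h2n : ((2:ℝ) ^ n) ≤ (L n : ℝ) := by exact_mod_cast hgrow n
  have h2npos : (0:ℝ) < (2:ℝ) ^ n := by positivity
  calc (L n : ℝ) ^ (-θ) ≤ ((2:ℝ) ^ n) ^ (-θ) := by
        apply Real.rpow_le_rpow_of_nonpos h2npos h2n (by linarith)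
    _ = ((2:ℝ) ^ (-θ)) ^ n := by
        rw [← Real.rpow_natCast (2:ℝ) n, ← Real.rpow_mul (by norm_num),
          ← Real.rpow_natCast ((2:ℝ) ^ (-θ)) n, ← Real.rpow_mul (by norm_num)]
        ring_nf
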